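/- arXiv:2407.08589 — 2 statements merged into one kernel-verified Lean document; each statement's English description precedes it below -/
import Mathlib

section
/- Let q be a prime power, d ≥ 1 an integer, and let E ⊆ F_q^d be a nonempty Sidon set. Then ‖Ê‖₄ ≤ 2·q^{−d}·√(#E), and more generally ‖Ê‖_p ≤ 2·q^{−d}·(#E)^{1−2/p} for every real p ≥ 4. (That is, every Sidon set is (p, 2/p)-Salem for all p ≥ 4, with explicit constant 2.) -/
open Finset

/-- The Fourier transform of (the indicator of) a set `E ⊆ F_q^d`:
`Ê(x) = q^{-d} ∑_{y ∈ E} χ(-x·y)`. -/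
noncomputable def fourierTransform {F : Type} [Field F] [Fintype F] [DecidableEq F] {d : ℕ}
    (χ : AddChar F ℂ) (E : Finset (Fin d → F)) (x : Fin d → F) : ℂ :=
  ((Fintype.card F : ℂ) ^ d)⁻¹ * ∑ y ∈ E, χ (-(∑ i, x i * y i))

/-- `‖Ê‖_p = ( q^{-d} ∑_{x ≠ 0} |Ê(x)|^p )^{1/p}`. -/
noncomputable def lpNorm {F : Type} [Field F] [Fintype F] [DecidableEq F] {d : ℕ}
    (χ : AddChar F ℂ) (E : Finset (Fin d → F)) (p : ℝ) : ℝ :=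
  (((Fintype.card F : ℝ) ^ d)⁻¹ *
      ∑ x ∈ Finset.univ.filter (fun x : Fin d → F => x ≠ 0),
        ‖fourierTransform χ E x‖ ^ p) ^ (1 / p)


section aux
variable {F : Type} [Field F] [Fintype F] [DecidableEq F] {d : ℕ}

variable {F : Type} [Field F] [Fintype F] [DecidableEq F] {d : ℕ}

/-- Dot product with a fixed vector, as an additive monoid hom. -/
def dotHom (v : Fin d → F) : (Fin d → F) →+ F where
  toFun x := ∑ i, x i * v i
  map_zero' := by simp
  map_add' x y := by simp [add_mul, Finset.sum_add_distrib]

lemma char_sum_eq (χ : AddChar F ℂ) (hχ : ∃ a, χ a ≠ 1) (v : Fin d → F) :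
    ∑ x : Fin d → F, χ (∑ i, x i * v i) =
      if v = 0 then ((Fintype.card F : ℂ) ^ d) else 0 := by
  split_ifs with hv
  · subst hv
    simp only [Pi.zero_apply, mul_zero, Finset.sum_const_zero, AddChar.map_zero_eq_one,
      Finset.sum_const, Finset.card_univ, nsmul_eq_mul, mul_one]
    rw [Fintype.card_fun]
    push_cast
    simp
  · have hne : (χ.compAddMonoidHom (dotHom v)) ≠ 1 := by
      obtain ⟨a, ha⟩ := hχ
      obtain ⟨i, hi⟩ : ∃ i, v i ≠ 0 := by
        by_contra h
        push_neg at h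
        exact hv (funext h)
      rw [AddChar.ne_one_iff]
      refine ⟨Pi.single i (a * (v i)⁻¹), ?_⟩
      have hdot : dotHom v (Pi.single i (a * (v i)⁻¹)) = a := by
        simp only [dotHom, AddMonoidHom.coe_mk, ZeroHom.coe_mk]
        rw [Finset.sum_eq_single i]
        · rw [Pi.single_eq_same]
          field_simp
        · intro j _ hj
          rw [Pi.single_eq_of_ne hj, zero_mul]
        · intro h
          exact absurd (Finset.mem_univ i) h
      rw [AddChar.compAddMonoidHom_apply, hdot]
      exact ha
    have h0 := AddChar.sum_eq_zero_of_ne_one hne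
    exact h0

lemma moment_le (χ : AddChar F ℂ) (hχ : ∃ a, χ a ≠ 1) (E : Finset (Fin d → F))
    (hSidon : ∀ a ∈ E, ∀ b ∈ E, ∀ c ∈ E, ∀ e ∈ E,
      a + b = c + e → (a = c ∧ b = e) ∨ (a = e ∧ b = c)) :
    ∑ x : Fin d → F, ‖∑ y ∈ E, χ (-(∑ i, x i * y i))‖ ^ (4 : ℕ)
      ≤ 2 * (Fintype.card F : ℝ) ^ d * (E.card : ℝ) ^ (2 : ℕ) := by
  set Q : ℝ := (Fintype.card F : ℝ) ^ d with hQdef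
  have hQ0 : 0 < Q := by positivity
  set S : (Fin d → F) → ℂ := fun x => ∑ y ∈ E, χ (-(∑ i, x i * y i)) with hSdef
  have habs : ∀ x, ((‖S x‖ : ℂ)) ^ (4 : ℕ)
      = (S x * (starRingEnd ℂ) (S x)) ^ 2 := by
    intro x
    rw [Complex.mul_conj, ← Complex.sq_norm]
    push_cast
    ring
  have expand : ∀ x : Fin d → F, (S x * (starRingEnd ℂ) (S x)) ^ 2
      = ∑ a ∈ E, ∑ b ∈ E, ∑ c ∈ E, ∑ e ∈ E, χ (∑ i, x i * ((c - a) + (e - b)) i) := by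
    intro x
    have hconj : (starRingEnd ℂ) (S x) = ∑ y ∈ E, χ (∑ i, x i * y i) := by
      rw [hSdef, map_sum]
      refine Finset.sum_congr rfl fun y _ => ?_
      rw [← AddChar.map_neg_eq_conj, neg_neg]
    have h1 : S x * (starRingEnd ℂ) (S x)
        = ∑ a ∈ E, ∑ c ∈ E, χ (∑ i, x i * (c - a) i) := by
      rw [hconj, hSdef]
      rw [Finset.sum_mul_sum]
      refine Finset.sum_congr rfl fun a _ => Finset.sum_congr rfl fun c _ => ?_
      rw [← AddChar.map_add_eq_mul]
      congr 1
      simp only [Pi.sub_apply, mul_sub, Finset.sum_sub_distrib]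
      ring
    rw [sq, h1, Finset.sum_mul_sum]
    refine Finset.sum_congr rfl fun a _ => Finset.sum_congr rfl fun b _ => ?_
    rw [Finset.sum_mul_sum]
    refine Finset.sum_congr rfl fun c _ => Finset.sum_congr rfl fun e _ => ?_
    rw [← AddChar.map_add_eq_mul]
    congr 1
    simp only [Pi.add_apply, Pi.sub_apply, mul_sub, mul_add, Finset.sum_add_distrib,
      Finset.sum_sub_distrib]
  have hsum : ∑ x : Fin d → F, (S x * (starRingEnd ℂ) (S x)) ^ 2
      = ∑ a ∈ E, ∑ b ∈ E, ∑ c ∈ E, ∑ e ∈ E,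
          (if (c - a) + (e - b) = 0 then ((Fintype.card F : ℂ) ^ d) else 0) := by
    calc ∑ x : Fin d → F, (S x * (starRingEnd ℂ) (S x)) ^ 2
        = ∑ x : Fin d → F, ∑ a ∈ E, ∑ b ∈ E, ∑ c ∈ E, ∑ e ∈ E,
            χ (∑ i, x i * ((c - a) + (e - b)) i) :=
          Finset.sum_congr rfl fun x _ => expand x
      _ = ∑ a ∈ E, ∑ b ∈ E, ∑ c ∈ E, ∑ e ∈ E,
            (if (c - a) + (e - b) = 0 then ((Fintype.card F : ℂ) ^ d) else 0) := by
          rw [Finset.sum_comm]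
          refine Finset.sum_congr rfl fun a _ => ?_
          rw [Finset.sum_comm]
          refine Finset.sum_congr rfl fun b _ => ?_
          rw [Finset.sum_comm]
          refine Finset.sum_congr rfl fun c _ => ?_
          rw [Finset.sum_comm]
          refine Finset.sum_congr rfl fun e _ => ?_
          exact char_sum_eq χ hχ _
  have hreal : ∑ x : Fin d → F, ‖S x‖ ^ (4 : ℕ)
      = ∑ a ∈ E, ∑ b ∈ E, ∑ c ∈ E, ∑ e ∈ E,
          (if (c - a) + (e - b) = 0 then Q else 0) := by
    rw [← Complex.ofReal_inj]
    have hL : (((∑ x : Fin d → F, ‖S x‖ ^ (4 : ℕ)) : ℝ) : ℂ)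
        = ∑ x : Fin d → F, (S x * (starRingEnd ℂ) (S x)) ^ 2 := by
      push_cast
      exact Finset.sum_congr rfl fun x _ => habs x
    rw [hL, hsum]
    simp only [hQdef]
    push_cast [apply_ite (fun r : ℝ => (r : ℂ))]
    norm_num
  rw [hreal]
  have inner : ∀ a ∈ E, ∀ b ∈ E,
      ∑ c ∈ E, ∑ e ∈ E, (if (c - a) + (e - b) = 0 then Q else 0) ≤ 2 * Q := by
    intro a ha b hb
    have hpt : ∀ c ∈ E, ∀ e ∈ E, (if (c - a) + (e - b) = 0 then Q else 0)
        ≤ (if c = a then Q else 0) * (if e = b then (1:ℝ) else 0)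
          + (if c = b then Q else 0) * (if e = a then (1:ℝ) else 0) := by
      intro c hc e he
      by_cases h : (c - a) + (e - b) = 0
      · have heq : a + b = c + e := by linear_combination -h
        rw [if_pos h]
        rcases hSidon a ha b hb c hc e he heq with ⟨h1, h2⟩ | ⟨h1, h2⟩
        · rw [if_pos h1.symm, if_pos h2.symm]
          have : (0:ℝ) ≤ (if c = b then Q else 0) * (if e = a then (1:ℝ) else 0) := by
            split_ifs <;> simp [hQ0.le]
          linarith
        · rw [if_pos h2.symm, if_pos h1.symm]
          have : (0:ℝ) ≤ (if c = a then Q else 0) * (if e = b then (1:ℝ) else 0) := by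
            split_ifs <;> simp [hQ0.le]
          linarith
      · rw [if_neg h]
        have h1 : (0:ℝ) ≤ (if c = a then Q else 0) * (if e = b then (1:ℝ) else 0) := by
          split_ifs <;> simp [hQ0.le]
        have h2 : (0:ℝ) ≤ (if c = b then Q else 0) * (if e = a then (1:ℝ) else 0) := by
          split_ifs <;> simp [hQ0.le]
        linarith
    calc ∑ c ∈ E, ∑ e ∈ E, (if (c - a) + (e - b) = 0 then Q else 0)
        ≤ ∑ c ∈ E, ∑ e ∈ E,
            ((if c = a then Q else 0) * (if e = b then (1:ℝ) else 0)
              + (if c = b then Q else 0) * (if e = a then (1:ℝ) else 0)) :=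
          Finset.sum_le_sum fun c hc => Finset.sum_le_sum fun e he => hpt c hc e he
      _ = (∑ c ∈ E, if c = a then Q else 0) * (∑ e ∈ E, if e = b then (1:ℝ) else 0)
            + (∑ c ∈ E, if c = b then Q else 0) * (∑ e ∈ E, if e = a then (1:ℝ) else 0) := by
          simp only [Finset.sum_add_distrib, ← Finset.mul_sum, ← Finset.sum_mul]
      _ = 2 * Q := by
          rw [Finset.sum_ite_eq' E a fun _ => Q, Finset.sum_ite_eq' E b fun _ => (1:ℝ),
            Finset.sum_ite_eq' E b fun _ => Q, Finset.sum_ite_eq' E a fun _ => (1:ℝ)]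
          simp [ha, hb]
          ring
  calc ∑ a ∈ E, ∑ b ∈ E, ∑ c ∈ E, ∑ e ∈ E, (if (c - a) + (e - b) = 0 then Q else 0)
      ≤ ∑ a ∈ E, ∑ b ∈ E, 2 * Q :=
        Finset.sum_le_sum fun a ha => Finset.sum_le_sum fun b hb => inner a ha b hb
    _ = 2 * Q * (E.card : ℝ) ^ (2 : ℕ) := by
        simp [Finset.sum_const, nsmul_eq_mul]
        ring

end aux

/-- Every nonempty Sidon set `E ⊆ F_q^d` satisfies `‖Ê‖₄ ≤ 2 q^{-d} √(#E)` and, more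
generally, `‖Ê‖_p ≤ 2 q^{-d} (#E)^{1-2/p}` for every real `p ≥ 4`. -/
theorem sidon_lp_bound {F : Type} [Field F] [Fintype F] [DecidableEq F] {d : ℕ}
    (hd : 1 ≤ d) (χ : AddChar F ℂ) (hχ : ∃ a, χ a ≠ 1)
    (E : Finset (Fin d → F)) (hE : E.Nonempty)
    (hSidon : ∀ a ∈ E, ∀ b ∈ E, ∀ c ∈ E, ∀ e ∈ E,
      a + b = c + e → (a = c ∧ b = e) ∨ (a = e ∧ b = c)) :
    lpNorm χ E 4 ≤ 2 * ((Fintype.card F : ℝ) ^ d)⁻¹ * Real.sqrt (E.card : ℝ) ∧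
      ∀ p : ℝ, 4 ≤ p →
        lpNorm χ E p ≤ 2 * ((Fintype.card F : ℝ) ^ d)⁻¹ * (E.card : ℝ) ^ (1 - 2 / p) := by
  have hq1 : (1:ℝ) ≤ (Fintype.card F : ℝ) := by
    exact_mod_cast Fintype.card_pos (α := F)
  set Q : ℝ := (Fintype.card F : ℝ) ^ d with hQdef
  set M : ℝ := (E.card : ℝ) with hMdef
  have hQ1 : 1 ≤ Q := one_le_pow₀ hq1
  have hQ0 : 0 < Q := lt_of_lt_of_le one_pos hQ1
  have hQi0 : 0 < Q⁻¹ := inv_pos.2 hQ0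
  have hM1 : (1:ℝ) ≤ M := by
    rw [hMdef]; exact_mod_cast hE.card_pos
  have hM0 : 0 < M := lt_of_lt_of_le one_pos hM1
  -- absolute value of the Fourier transform
  have hAeq : ∀ x, ‖fourierTransform χ E x‖
      = Q⁻¹ * ‖∑ y ∈ E, χ (-(∑ i, x i * y i))‖ := by
    intro x
    rw [fourierTransform, norm_mul, norm_inv, norm_pow, Complex.norm_natCast]
  have hA0 : ∀ x, 0 ≤ ‖fourierTransform χ E x‖ := fun x => norm_nonneg _
  have hAle : ∀ x, ‖fourierTransform χ E x‖ ≤ Q⁻¹ * M := by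
    intro x
    rw [hAeq x]
    refine mul_le_mul_of_nonneg_left ?_ hQi0.le
    refine le_trans (norm_sum_le _ _) ?_
    have h1 : ∀ y ∈ E, ‖χ (-(∑ i, x i * y i))‖ = 1 := by
      intro y _
      rw [AddChar.norm_apply]
    rw [Finset.sum_congr rfl h1, Finset.sum_const, nsmul_eq_mul, mul_one]
  -- fourth moment bound for the fourier transform, over nonzero x
  have hsum4 : ∑ x ∈ Finset.univ.filter (fun x : Fin d → F => x ≠ 0),
      ‖fourierTransform χ E x‖ ^ (4:ℕ) ≤ 2 * Q⁻¹ ^ (3:ℕ) * M ^ (2:ℕ) := by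
    have h1 : ∑ x ∈ Finset.univ.filter (fun x : Fin d → F => x ≠ 0),
        ‖fourierTransform χ E x‖ ^ (4:ℕ)
        ≤ ∑ x : Fin d → F, ‖fourierTransform χ E x‖ ^ (4:ℕ) := by
      refine Finset.sum_le_sum_of_subset_of_nonneg (Finset.filter_subset _ _) ?_
      intro x _ _
      positivity
    have h2 : ∑ x : Fin d → F, ‖fourierTransform χ E x‖ ^ (4:ℕ)
        = Q⁻¹ ^ (4:ℕ) * ∑ x : Fin d → F,
            ‖∑ y ∈ E, χ (-(∑ i, x i * y i))‖ ^ (4:ℕ) := by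
      rw [Finset.mul_sum]
      refine Finset.sum_congr rfl fun x _ => ?_
      rw [hAeq x, mul_pow]
    have h3 := moment_le χ hχ E hSidon
    calc ∑ x ∈ Finset.univ.filter (fun x : Fin d → F => x ≠ 0),
        ‖fourierTransform χ E x‖ ^ (4:ℕ)
        ≤ Q⁻¹ ^ (4:ℕ) * ∑ x : Fin d → F,
            ‖∑ y ∈ E, χ (-(∑ i, x i * y i))‖ ^ (4:ℕ) := by
          rw [← h2]; exact h1
      _ ≤ Q⁻¹ ^ (4:ℕ) * (2 * Q * M ^ (2:ℕ)) := by
          exact mul_le_mul_of_nonneg_left h3 (by positivity)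
      _ = 2 * Q⁻¹ ^ (3:ℕ) * M ^ (2:ℕ) := by
          field_simp
  -- general p bound
  have main : ∀ p : ℝ, 4 ≤ p →
      lpNorm χ E p ≤ 2 * Q⁻¹ * M ^ (1 - 2 / p) := by
    intro p hp
    have hp0 : 0 < p := by linarith
    have hsum4' : ∑ x ∈ Finset.univ.filter (fun x : Fin d → F => x ≠ 0),
        ‖fourierTransform χ E x‖ ^ (4:ℝ) ≤ 2 * Q⁻¹ ^ (3:ℕ) * M ^ (2:ℕ) := by
      refine le_trans (le_of_eq (Finset.sum_congr rfl fun x _ => ?_)) hsum4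
      rw [show (4:ℝ) = ((4:ℕ):ℝ) by norm_num, Real.rpow_natCast]
    have hsump : ∑ x ∈ Finset.univ.filter (fun x : Fin d → F => x ≠ 0),
        ‖fourierTransform χ E x‖ ^ p
        ≤ (Q⁻¹ * M) ^ (p - 4) * (2 * Q⁻¹ ^ (3:ℕ) * M ^ (2:ℕ)) := by
      calc ∑ x ∈ Finset.univ.filter (fun x : Fin d → F => x ≠ 0),
          ‖fourierTransform χ E x‖ ^ p
          = ∑ x ∈ Finset.univ.filter (fun x : Fin d → F => x ≠ 0),
            ‖fourierTransform χ E x‖ ^ (p - 4)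
              * ‖fourierTransform χ E x‖ ^ (4:ℝ) := by
            refine Finset.sum_congr rfl fun x _ => ?_
            rw [← Real.rpow_add' (hA0 x) (by linarith : (p - 4) + 4 ≠ 0)]
            norm_num
        _ ≤ ∑ x ∈ Finset.univ.filter (fun x : Fin d → F => x ≠ 0),
            (Q⁻¹ * M) ^ (p - 4) * ‖fourierTransform χ E x‖ ^ (4:ℝ) := by
            refine Finset.sum_le_sum fun x _ => ?_
            refine mul_le_mul_of_nonneg_right ?_ (Real.rpow_nonneg (hA0 x) _)
            exact Real.rpow_le_rpow (hA0 x) (hAle x) (by linarith)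
        _ = (Q⁻¹ * M) ^ (p - 4) * ∑ x ∈ Finset.univ.filter (fun x : Fin d → F => x ≠ 0),
            ‖fourierTransform χ E x‖ ^ (4:ℝ) := by
            rw [Finset.mul_sum]
        _ ≤ (Q⁻¹ * M) ^ (p - 4) * (2 * Q⁻¹ ^ (3:ℕ) * M ^ (2:ℕ)) := by
            exact mul_le_mul_of_nonneg_left hsum4' (by positivity)
    have hB : Q⁻¹ * ((Q⁻¹ * M) ^ (p - 4) * (2 * Q⁻¹ ^ (3:ℕ) * M ^ (2:ℕ)))
        = 2 * Q⁻¹ ^ p * M ^ (p - 2) := by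
      rw [Real.mul_rpow hQi0.le hM0.le]
      have h1 : Q⁻¹ ^ (p - 4) * Q⁻¹ ^ (3:ℕ) * Q⁻¹ = Q⁻¹ ^ p := by
        rw [mul_assoc, show Q⁻¹ ^ (3:ℕ) * Q⁻¹ = Q⁻¹ ^ (4:ℕ) by ring,
          ← Real.rpow_natCast Q⁻¹ 4, ← Real.rpow_add hQi0]
        norm_num
      have h2 : M ^ (p - 4) * M ^ (2:ℕ) = M ^ (p - 2) := by
        rw [← Real.rpow_natCast M 2, ← Real.rpow_add hM0]
        norm_num
        rw [show p - 4 + 2 = p - 2 by ring]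
      calc Q⁻¹ * (Q⁻¹ ^ (p - 4) * M ^ (p - 4) * (2 * Q⁻¹ ^ (3:ℕ) * M ^ (2:ℕ)))
          = 2 * (Q⁻¹ ^ (p - 4) * Q⁻¹ ^ (3:ℕ) * Q⁻¹) * (M ^ (p - 4) * M ^ (2:ℕ)) := by ring
        _ = 2 * Q⁻¹ ^ p * M ^ (p - 2) := by rw [h1, h2]
    have hRoot : (2 * Q⁻¹ ^ p * M ^ (p - 2)) ^ (1 / p)
        = (2:ℝ) ^ (1 / p) * Q⁻¹ * M ^ (1 - 2 / p) := by
      rw [Real.mul_rpow (by positivity) (by positivity),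
        Real.mul_rpow (by norm_num) (by positivity),
        ← Real.rpow_mul hQi0.le, ← Real.rpow_mul hM0.le]
      have e1 : p * (1 / p) = 1 := by field_simp
      have e2 : (p - 2) * (1 / p) = 1 - 2 / p := by field_simp
      rw [e1, e2, Real.rpow_one]
    have h2le : (2:ℝ) ^ (1 / p) ≤ 2 := by
      calc (2:ℝ) ^ (1 / p) ≤ (2:ℝ) ^ (1:ℝ) :=
            Real.rpow_le_rpow_of_exponent_le one_le_two (by
              rw [div_le_one hp0]; linarith)
        _ = 2 := Real.rpow_one 2
    rw [lpNorm, ← hQdef]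
    calc (Q⁻¹ * ∑ x ∈ Finset.univ.filter (fun x : Fin d → F => x ≠ 0),
          ‖fourierTransform χ E x‖ ^ p) ^ (1 / p)
        ≤ (Q⁻¹ * ((Q⁻¹ * M) ^ (p - 4) * (2 * Q⁻¹ ^ (3:ℕ) * M ^ (2:ℕ)))) ^ (1 / p) := by
          refine Real.rpow_le_rpow ?_ (mul_le_mul_of_nonneg_left hsump hQi0.le) (by positivity)
          refine mul_nonneg hQi0.le (Finset.sum_nonneg fun x _ => Real.rpow_nonneg (hA0 x) _)
      _ = (2:ℝ) ^ (1 / p) * Q⁻¹ * M ^ (1 - 2 / p) := by rw [hB, hRoot]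
      _ ≤ 2 * Q⁻¹ * M ^ (1 - 2 / p) := by
          refine mul_le_mul_of_nonneg_right (mul_le_mul_of_nonneg_right h2le hQi0.le) ?_
          positivity
  refine ⟨?_, main⟩
  have h4 := main 4 (le_refl 4)
  calc lpNorm χ E 4 ≤ 2 * Q⁻¹ * M ^ (1 - 2 / (4:ℝ)) := h4
    _ = 2 * Q⁻¹ * Real.sqrt M := by
        rw [show (1 - 2 / (4:ℝ)) = 1/2 by norm_num, Real.sqrt_eq_rpow]
end

section
/- Fix an integer d ≥ 2, a real s ∈ (0, 1/2], and a real A ≥ 1. There exist constants C, c > 0 (depending only on d, s, A) such that for every odd prime power q and every E ⊆ F_q^d satisfying #E ≥ C·q^{d/2} and ‖Ê‖₄ ≤ A·q^{−d}·(#E)^{1−s}, the distance set D(E) = { (x₁−y₁)² + ⋯ + (x_d−y_d)² : x, y ∈ E } ⊆ F_q satisfies #D(E) ≥ c · min( q, q^{1−d}·(#E)^{4s} ). In particular, if E is (4, 1/2)-Salem and #E ≥ C q^{d/2}, then #D(E) ≳ q. -/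
open Finset

set_option linter.unusedSectionVars false

section Aux
variable {F : Type} [Field F] [Fintype F] [DecidableEq F]

lemma my_map_sum {ι : Type*} (χ : AddChar F ℂ) (s : Finset ι) (f : ι → F) :
    χ (∑ i ∈ s, f i) = ∏ i ∈ s, χ (f i) := by
  induction s using Finset.cons_induction with
  | empty => simp
  | cons a s ha ih => simp [Finset.sum_cons, Finset.prod_cons, AddChar.map_add_eq_mul, ih]

lemma my_conj (χ : AddChar F ℂ) (a : F) : (starRingEnd ℂ) (χ a) = χ (-a) := by
  have h : 0 < ringChar F :=
    Nat.pos_of_ne_zero (CharP.char_ne_zero_of_finite F (ringChar F))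
  rw [AddChar.starComp_apply h, AddChar.inv_apply]

lemma my_orth {χ : AddChar F ℂ} (hχ : χ ≠ 1) (c : F) :
    ∑ v : F, χ (c * v) = if c = 0 then (Fintype.card F : ℂ) else 0 := by
  simp_rw [mul_comm c]
  rw [AddChar.sum_mulShift c (AddChar.IsPrimitive.of_ne_one hχ)]
  split_ifs <;> simp

lemma my_two_ne_zero (hq : Odd (Fintype.card F)) : (2 : F) ≠ 0 := by
  intro h
  have hp : (ringChar F).Prime := CharP.char_is_prime F (ringChar F)
  have hdvd : ringChar F ∣ 2 := (CharP.cast_eq_zero_iff F (ringChar F) 2).mp (by exact_mod_cast h)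
  have h2 : ringChar F = 2 := (Nat.prime_dvd_prime_iff_eq hp Nat.prime_two).mp hdvd
  have hcard := (FiniteField.even_card_iff_char_two (F := F)).mp h2
  have := Nat.odd_iff.mp hq
  omega

variable {d : ℕ}

/-- `S m = ∑_{x∈E} χ(m·x)`. -/
noncomputable def Sfn (χ : AddChar F ℂ) (E : Finset (Fin d → F)) (m : Fin d → F) : ℂ :=
  ∑ x ∈ E, χ (∑ i, m i * x i)

/-- Gauss-type sum `G r = ∑_t χ(r t²)`. -/
noncomputable def Gfn (χ : AddChar F ℂ) (r : F) : ℂ := ∑ t : F, χ (r * t ^ 2)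

lemma my_orth_vec {χ : AddChar F ℂ} (hχ : χ ≠ 1) (m : Fin d → F) :
    ∑ x : Fin d → F, χ (∑ i, m i * x i) =
      if m = 0 then ((Fintype.card F : ℂ)) ^ d else 0 := by
  have h1 : ∀ x : Fin d → F, χ (∑ i, m i * x i) = ∏ i, χ (m i * x i) := fun x =>
    my_map_sum χ univ fun i => m i * x i
  simp_rw [h1]
  rw [← Fintype.prod_sum (fun i v => χ (m i * v))]
  simp_rw [my_orth hχ]
  by_cases hm : m = 0
  · simp [hm]
  · obtain ⟨i, hi⟩ : ∃ i, m i ≠ 0 := by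
      by_contra h
      push_neg at h
      exact hm (funext h)
    rw [if_neg hm]
    exact Finset.prod_eq_zero (Finset.mem_univ i) (by simp [hi])

lemma gauss_normSq {χ : AddChar F ℂ} (hχ : χ ≠ 1) (h2 : (2 : F) ≠ 0) {r : F} (hr : r ≠ 0) :
    Gfn χ r * (starRingEnd ℂ) (Gfn χ r) = (Fintype.card F : ℂ) := by
  have hconj : (starRingEnd ℂ) (Gfn χ r) = ∑ t' : F, χ (-(r * t' ^ 2)) := by
    rw [Gfn, map_sum]
    exact Finset.sum_congr rfl fun t _ => my_conj χ _
  rw [hconj, Gfn, Finset.sum_mul_sum]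
  have key : ∀ t t' : F, χ (r * t ^ 2) * χ (-(r * t' ^ 2)) =
      χ (r * ((t - t') * (t + t'))) := by
    intro t t'
    rw [← AddChar.map_add_eq_mul]
    ring_nf
  simp_rw [key]
  -- reindex (t,t') ↦ (t-t', t+t')
  have hsum : ∑ t : F, ∑ t' : F, χ (r * ((t - t') * (t + t'))) =
      ∑ u : F, ∑ v : F, χ (r * (u * v)) := by
    rw [← Finset.sum_product', ← Finset.sum_product']
    apply Finset.sum_nbij' (fun p => (p.1 - p.2, p.1 + p.2))
      (fun p => ((p.1 + p.2) / 2, (p.2 - p.1) / 2))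
    · intro a _; exact Finset.mem_univ _
    · intro a _; exact Finset.mem_univ _
    · intro a _
      ext <;> (simp only; field_simp; ring)
    · intro a _
      ext <;> (simp only; field_simp; ring)
    · intro a _; rfl
  rw [hsum]
  have : ∀ u : F, ∑ v : F, χ (r * (u * v)) = if r * u = 0 then (Fintype.card F : ℂ) else 0 := by
    intro u
    simp_rw [← mul_assoc]
    exact my_orth hχ (r * u)
  simp_rw [this, mul_eq_zero]
  simp [hr, Finset.sum_ite_eq']

lemma gauss_shift (χ : AddChar F ℂ) (h2 : (2 : F) ≠ 0) {r : F} (hr : r ≠ 0) (m : F) :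
    ∑ t : F, χ (r * t ^ 2 - m * t) = χ (-(m ^ 2 * (4 * r)⁻¹)) * Gfn χ r := by
  have h4 : (4 : F) ≠ 0 := by
    intro h
    apply h2
    have : (4 : F) = 2 * 2 := by norm_num
    rcases mul_eq_zero.mp (this ▸ h) with h' | h' <;> exact h'
  have h4r : 4 * r ≠ 0 := mul_ne_zero h4 hr
  have h2r : 2 * r ≠ 0 := mul_ne_zero h2 hr
  rw [Gfn, Finset.mul_sum]
  refine (Fintype.sum_equiv (Equiv.addRight (m * (2 * r)⁻¹)) _ _ ?_).symm
  intro t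
  simp only [Equiv.coe_addRight]
  rw [← AddChar.map_add_eq_mul]
  congr 1
  field_simp
  ring

lemma char_quad_expand {χ : AddChar F ℂ} (hχ : χ ≠ 1) (h2 : (2 : F) ≠ 0) {r : F}
    (hr : r ≠ 0) (u : F) :
    (Fintype.card F : ℂ) * χ (r * u ^ 2) =
      ∑ m : F, χ (-(m ^ 2 * (4 * r)⁻¹)) * Gfn χ r * χ (m * u) := by
  have step1 : ∀ m : F, χ (-(m ^ 2 * (4 * r)⁻¹)) * Gfn χ r * χ (m * u) =
      ∑ t : F, χ (r * t ^ 2 - m * t + m * u) := by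
    intro m
    rw [← gauss_shift χ h2 hr m, Finset.sum_mul]
    exact Finset.sum_congr rfl fun t _ => (AddChar.map_add_eq_mul χ _ _).symm
  simp_rw [step1]
  rw [Finset.sum_comm]
  have step2 : ∀ t : F, ∑ m : F, χ (r * t ^ 2 - m * t + m * u) =
      χ (r * t ^ 2) * (if u - t = 0 then (Fintype.card F : ℂ) else 0) := by
    intro t
    rw [← my_orth hχ (u - t), Finset.mul_sum]
    apply Finset.sum_congr rfl
    intro m _
    rw [← AddChar.map_add_eq_mul]
    congr 1
    ring
  simp_rw [step2, sub_eq_zero, mul_ite, mul_zero]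
  rw [Finset.sum_ite_eq]
  simp [mul_comm]

lemma vec_expand {χ : AddChar F ℂ} (hχ : χ ≠ 1) (h2 : (2 : F) ≠ 0) {r : F} (hr : r ≠ 0)
    (u : Fin d → F) :
    (Fintype.card F : ℂ) ^ d * χ (r * ∑ i, u i ^ 2) =
      ∑ m : Fin d → F,
        χ (-((∑ i, m i ^ 2) * (4 * r)⁻¹)) * Gfn χ r ^ d * χ (∑ i, m i * u i) := by
  have hL : (Fintype.card F : ℂ) ^ d * χ (r * ∑ i, u i ^ 2) =
      ∏ i : Fin d, ((Fintype.card F : ℂ) * χ (r * u i ^ 2)) := by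
    rw [Finset.prod_mul_distrib, Finset.prod_const, Finset.card_univ, Fintype.card_fin,
      Finset.mul_sum (a := r), my_map_sum]
  rw [hL]
  have : ∀ i : Fin d, (Fintype.card F : ℂ) * χ (r * u i ^ 2) =
      ∑ m : F, χ (-(m ^ 2 * (4 * r)⁻¹)) * Gfn χ r * χ (m * u i) :=
    fun i => char_quad_expand hχ h2 hr (u i)
  simp_rw [this]
  rw [Fintype.prod_sum (fun i v => χ (-(v ^ 2 * (4 * r)⁻¹)) * Gfn χ r * χ (v * u i))]
  apply Finset.sum_congr rfl
  intro m _
  rw [Finset.prod_mul_distrib, Finset.prod_mul_distrib, Finset.prod_const, Finset.card_univ,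
    Fintype.card_fin, ← my_map_sum, ← my_map_sum]
  congr 2
  rw [Finset.sum_mul, ← Finset.sum_neg_distrib]

noncomputable def Tfn (χ : AddChar F ℂ) (E : Finset (Fin d → F)) (r : F) : ℂ :=
  ∑ p ∈ E ×ˢ E, χ (r * ∑ i, (p.1 i - p.2 i) ^ 2)

lemma T_expand {χ : AddChar F ℂ} (hχ : χ ≠ 1) (h2 : (2 : F) ≠ 0) (E : Finset (Fin d → F))
    {r : F} (hr : r ≠ 0) :
    (Fintype.card F : ℂ) ^ d * Tfn χ E r =
      ∑ m : Fin d → F, χ (-((∑ i, m i ^ 2) * (4 * r)⁻¹)) * Gfn χ r ^ d *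
        (Complex.normSq (Sfn χ E m) : ℂ) := by
  rw [Tfn, Finset.mul_sum]
  have h1 : ∀ p ∈ E ×ˢ E, (Fintype.card F : ℂ) ^ d * χ (r * ∑ i, (p.1 i - p.2 i) ^ 2) =
      ∑ m : Fin d → F, χ (-((∑ i, m i ^ 2) * (4 * r)⁻¹)) * Gfn χ r ^ d *
        χ (∑ i, m i * (p.1 i - p.2 i)) :=
    fun p _ => vec_expand hχ h2 hr fun i => p.1 i - p.2 i
  rw [Finset.sum_congr rfl h1, Finset.sum_comm]
  apply Finset.sum_congr rfl
  intro m _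
  have key : ∑ p ∈ E ×ˢ E, χ (∑ i, m i * (p.1 i - p.2 i)) =
      (Complex.normSq (Sfn χ E m) : ℂ) := by
    rw [← Complex.mul_conj, Sfn, map_sum, Finset.sum_mul_sum, Finset.sum_product]
    apply Finset.sum_congr rfl; intro x _
    apply Finset.sum_congr rfl; intro y _
    rw [my_conj, ← AddChar.map_add_eq_mul]
    congr 1
    rw [← Finset.sum_neg_distrib, ← Finset.sum_add_distrib]
    apply Finset.sum_congr rfl; intro i _
    ring
  rw [← Finset.mul_sum, key]

def Dfun (p : (Fin d → F) × (Fin d → F)) : F := ∑ i, (p.1 i - p.2 i) ^ 2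

noncomputable def nuf (E : Finset (Fin d → F)) (t : F) : ℕ :=
  ((E ×ˢ E).filter fun p => Dfun p = t).card

noncomputable def Lam (E : Finset (Fin d → F)) : ℕ :=
  (((E ×ˢ E) ×ˢ (E ×ˢ E)).filter fun z => Dfun z.1 = Dfun z.2).card

lemma sum_T_normSq {χ : AddChar F ℂ} (hχ : χ ≠ 1) (E : Finset (Fin d → F)) :
    ∑ r : F, Tfn χ E r * (starRingEnd ℂ) (Tfn χ E r) =
      (Fintype.card F : ℂ) * (Lam E : ℂ) := by
  have hconj : ∀ r : F, (starRingEnd ℂ) (Tfn χ E r) =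
      ∑ p ∈ E ×ˢ E, χ (-(r * ∑ i, (p.1 i - p.2 i) ^ 2)) := by
    intro r; rw [Tfn, map_sum]; exact Finset.sum_congr rfl fun p _ => my_conj χ _
  have h1 : ∀ r : F, Tfn χ E r * (starRingEnd ℂ) (Tfn χ E r) =
      ∑ p ∈ E ×ˢ E, ∑ p' ∈ E ×ˢ E, χ ((Dfun p - Dfun p') * r) := by
    intro r
    rw [hconj, Tfn, Finset.sum_mul_sum]
    refine Finset.sum_congr rfl fun p _ => Finset.sum_congr rfl fun p' _ => ?_
    rw [← AddChar.map_add_eq_mul]; congr 1; simp only [Dfun]; ring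
  simp_rw [h1]
  rw [Finset.sum_comm]
  have h2 : ∀ p ∈ E ×ˢ E, ∑ r : F, ∑ p' ∈ E ×ˢ E, χ ((Dfun p - Dfun p') * r) =
      ∑ p' ∈ E ×ˢ E, (if Dfun p = Dfun p' then (Fintype.card F : ℂ) else 0) := by
    intro p _
    rw [Finset.sum_comm]
    refine Finset.sum_congr rfl fun p' _ => ?_
    rw [my_orth hχ]
    simp [sub_eq_zero]
  rw [Finset.sum_congr rfl h2, ← Finset.sum_product']
  have h3 : ∀ z ∈ (E ×ˢ E) ×ˢ (E ×ˢ E), (if Dfun z.1 = Dfun z.2 then (Fintype.card F : ℂ) else 0)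
      = if Dfun z.1 = Dfun z.2 then (Fintype.card F : ℂ) else 0 := fun _ _ => rfl
  rw [← Finset.sum_filter]
  rw [Finset.sum_const, Lam]
  simp [mul_comm]

lemma Lam_eq (E : Finset (Fin d → F)) :
    Lam E = ∑ t ∈ (E ×ˢ E).image Dfun, nuf E t ^ 2 := by
  rw [Lam]
  rw [Finset.card_eq_sum_card_fiberwise
    (f := fun z => Dfun z.1) (t := (E ×ˢ E).image Dfun) ?_]
  · refine Finset.sum_congr rfl fun t _ => ?_
    have : (((E ×ˢ E) ×ˢ (E ×ˢ E)).filter fun z => Dfun z.1 = Dfun z.2).filter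
        (fun z => Dfun z.1 = t) =
        ((E ×ˢ E).filter fun p => Dfun p = t) ×ˢ ((E ×ˢ E).filter fun p => Dfun p = t) := by
      ext z
      simp only [Finset.mem_filter, Finset.mem_product]
      constructor
      · rintro ⟨⟨⟨hz1, hz2⟩, he⟩, ht⟩
        exact ⟨⟨hz1, ht⟩, hz2, he ▸ ht⟩
      · rintro ⟨⟨hz1, ht1⟩, hz2, ht2⟩
        exact ⟨⟨⟨hz1, hz2⟩, ht1.trans ht2.symm⟩, ht1⟩
    rw [this, Finset.card_product, nuf, sq]
  · intro z hz
    rw [Finset.mem_coe, Finset.mem_filter, Finset.mem_product] at hz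
    exact Finset.mem_coe.mpr (Finset.mem_image_of_mem _ hz.1.1)

lemma sum_nuf (E : Finset (Fin d → F)) :
    ∑ t ∈ (E ×ˢ E).image Dfun, nuf E t = E.card ^ 2 := by
  rw [sq, ← Finset.card_product E E]
  exact (Finset.card_eq_sum_card_fiberwise fun p hp => Finset.mem_image_of_mem _ hp).symm

lemma sq_roots_card (c : F) : (univ.filter fun u : F => u ^ 2 = c).card ≤ 2 := by
  rcases (univ.filter fun u : F => u ^ 2 = c).eq_empty_or_nonempty with h | h
  · simp [h]
  · obtain ⟨u₀, hu₀⟩ := h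
    simp only [Finset.mem_filter, Finset.mem_univ, true_and] at hu₀
    have hsub : (univ.filter fun u : F => u ^ 2 = c) ⊆ {u₀, -u₀} := by
      intro u hu
      simp only [Finset.mem_filter, Finset.mem_univ, true_and] at hu
      have hz : (u - u₀) * (u + u₀) = 0 := by
        have : u ^ 2 - u₀ ^ 2 = 0 := by rw [hu, hu₀, sub_self]
        calc (u - u₀) * (u + u₀) = u ^ 2 - u₀ ^ 2 := by ring
        _ = 0 := this
      rcases mul_eq_zero.mp hz with h' | h'
      · simp [sub_eq_zero.mp h']
      · simp [eq_neg_of_add_eq_zero_left h']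
    calc (univ.filter fun u : F => u ^ 2 = c).card ≤ ({u₀, -u₀} : Finset F).card :=
        Finset.card_le_card hsub
      _ ≤ 2 := Finset.card_insert_le _ _ |>.trans (by simp)

lemma sphere_card (hd : 1 ≤ d) (t : F) :
    (univ.filter fun m : Fin d → F => ∑ i, m i ^ 2 = t).card ≤
      2 * Fintype.card F ^ (d - 1) := by
  obtain ⟨n, rfl⟩ : ∃ n, d = n + 1 := ⟨d - 1, by omega⟩
  rw [Finset.card_eq_sum_card_fiberwise
    (f := fun m : Fin (n + 1) → F => fun i : Fin n => m i.succ)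
    (t := (univ : Finset (Fin n → F))) (fun _ _ => Finset.mem_univ _)]
  have hfib : ∀ g : Fin n → F,
      (((univ : Finset (Fin (n+1) → F)).filter fun m => ∑ i, m i ^ 2 = t).filter
        fun m => (fun i : Fin n => m i.succ) = g).card ≤ 2 := by
    intro g
    have hinj : Set.InjOn (fun m : Fin (n+1) → F => m 0)
        ((((univ : Finset (Fin (n+1) → F)).filter fun m => ∑ i, m i ^ 2 = t).filter
          fun m => (fun i : Fin n => m i.succ) = g) : Finset (Fin (n+1) → F)) := by
      intro m₁ h₁ m₂ h₂ h0
      simp only [Finset.coe_filter, Set.mem_setOf_eq, Finset.mem_filter] at h₁ h₂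
      funext i
      refine Fin.cases ?_ ?_ i
      · exact h0
      · intro j
        have e1 := congrFun h₁.2 j
        have e2 := congrFun h₂.2 j
        rw [e1, e2]
    have hmaps : ∀ m ∈ (((univ : Finset (Fin (n+1) → F)).filter fun m => ∑ i, m i ^ 2 = t).filter
        fun m => (fun i : Fin n => m i.succ) = g),
        m 0 ∈ univ.filter fun u : F => u ^ 2 = t - ∑ i : Fin n, g i ^ 2 := by
      intro m hm
      simp only [Finset.mem_filter, Finset.mem_univ, true_and] at hm ⊢
      obtain ⟨hsum, htail⟩ := hm
      rw [Fin.sum_univ_succ] at hsum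
      have : ∑ i : Fin n, m i.succ ^ 2 = ∑ i : Fin n, g i ^ 2 := by
        refine Finset.sum_congr rfl fun i _ => ?_
        rw [congrFun htail i]
      rw [this] at hsum
      rw [eq_sub_iff_add_eq]
      exact hsum
    exact le_trans (Finset.card_le_card_of_injOn _ hmaps hinj) (sq_roots_card _)
  refine le_trans (Finset.sum_le_sum fun g _ => hfib g) ?_
  rw [Finset.sum_const, Finset.card_univ, smul_eq_mul, mul_comm]
  simp [Fintype.card_fun]

lemma my_four_ne_zero (h2 : (2 : F) ≠ 0) : (4 : F) ≠ 0 := by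
  intro h
  apply h2
  have h4 : (4 : F) = 2 * 2 := by norm_num
  rcases mul_eq_zero.mp (h4 ▸ h) with h' | h' <;> exact h'

lemma sum_inv_char {χ : AddChar F ℂ} (hχ : χ ≠ 1) (h2 : (2 : F) ≠ 0) (c : F) :
    ∑ r ∈ univ.filter (fun r : F => r ≠ 0), χ (c * (4 * r)⁻¹) =
      if c = 0 then (Fintype.card F : ℂ) - 1 else -1 := by
  have h4 : (4 : F) ≠ 0 := my_four_ne_zero h2
  have step1 : ∑ r ∈ univ.filter (fun r : F => r ≠ 0), χ (c * (4 * r)⁻¹) =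
      ∑ w ∈ univ.filter (fun w : F => w ≠ 0), χ (c * w) := by
    apply Finset.sum_nbij' (fun r => (4 * r)⁻¹) (fun w => (4 * w)⁻¹)
    · intro r hr
      simp only [Finset.mem_filter, Finset.mem_univ, true_and] at hr ⊢
      exact inv_ne_zero (mul_ne_zero h4 hr)
    · intro w hw
      simp only [Finset.mem_filter, Finset.mem_univ, true_and] at hw ⊢
      exact inv_ne_zero (mul_ne_zero h4 hw)
    · intro r hr
      simp only [Finset.mem_filter, Finset.mem_univ, true_and] at hr
      field_simp
    · intro w hw
      simp only [Finset.mem_filter, Finset.mem_univ, true_and] at hw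
      field_simp
    · intro r _; rfl
  rw [step1, Finset.filter_ne', Finset.sum_erase_eq_sub (Finset.mem_univ 0)]
  rw [my_orth hχ c]
  simp only [mul_zero, AddChar.map_zero_eq_one]
  split_ifs <;> simp

noncomputable def afn (χ : AddChar F ℂ) (E : Finset (Fin d → F)) (m : Fin d → F) : ℝ :=
  Complex.normSq (Sfn χ E m)

noncomputable def Bfn (χ : AddChar F ℂ) (E : Finset (Fin d → F)) (r : F) : ℂ :=
  ∑ m ∈ univ.filter (fun m : Fin d → F => m ≠ 0),
    χ (-((∑ i, m i ^ 2) * (4 * r)⁻¹)) * (afn χ E m : ℂ)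

lemma B_rsum {χ : AddChar F ℂ} (hχ : χ ≠ 1) (h2 : (2 : F) ≠ 0) (E : Finset (Fin d → F)) :
    ∑ r ∈ univ.filter (fun r : F => r ≠ 0), (Complex.normSq (Bfn χ E r) : ℝ) =
      ∑ m ∈ univ.filter (fun m : Fin d → F => m ≠ 0),
        ∑ m' ∈ univ.filter (fun m' : Fin d → F => m' ≠ 0),
          afn χ E m * afn χ E m' *
            (if (∑ i, m' i ^ 2) - (∑ i, m i ^ 2) = 0 then (Fintype.card F : ℝ) - 1 else -1) := by
  have key : ∑ r ∈ univ.filter (fun r : F => r ≠ 0), (Bfn χ E r * (starRingEnd ℂ) (Bfn χ E r)) =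
      ∑ m ∈ univ.filter (fun m : Fin d → F => m ≠ 0),
        ∑ m' ∈ univ.filter (fun m' : Fin d → F => m' ≠ 0),
          ((afn χ E m : ℂ) * (afn χ E m' : ℂ)) *
            (if (∑ i, m' i ^ 2) - (∑ i, m i ^ 2) = 0 then (Fintype.card F : ℂ) - 1 else -1) := by
    have hconj : ∀ r : F, (starRingEnd ℂ) (Bfn χ E r) =
        ∑ m' ∈ univ.filter (fun m' : Fin d → F => m' ≠ 0),
          χ ((∑ i, m' i ^ 2) * (4 * r)⁻¹) * (afn χ E m' : ℂ) := by
      intro r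
      rw [Bfn, map_sum]
      refine Finset.sum_congr rfl fun m' _ => ?_
      rw [map_mul, my_conj, neg_neg, Complex.conj_ofReal]
    have hexp : ∀ r : F, Bfn χ E r * (starRingEnd ℂ) (Bfn χ E r) =
        ∑ m ∈ univ.filter (fun m : Fin d → F => m ≠ 0),
          ∑ m' ∈ univ.filter (fun m' : Fin d → F => m' ≠ 0),
            ((afn χ E m : ℂ) * (afn χ E m' : ℂ)) *
              χ (((∑ i, m' i ^ 2) - (∑ i, m i ^ 2)) * (4 * r)⁻¹) := by
      intro r
      rw [hconj, Bfn, Finset.sum_mul_sum]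
      refine Finset.sum_congr rfl fun m _ => Finset.sum_congr rfl fun m' _ => ?_
      rw [mul_mul_mul_comm, ← AddChar.map_add_eq_mul, mul_comm]
      congr 2
      ring
    simp_rw [hexp]
    rw [Finset.sum_comm]
    refine Finset.sum_congr rfl fun m _ => ?_
    rw [Finset.sum_comm]
    refine Finset.sum_congr rfl fun m' _ => ?_
    rw [← Finset.mul_sum, sum_inv_char hχ h2]
  have cast1 : ∀ r : F, Bfn χ E r * (starRingEnd ℂ) (Bfn χ E r) =
      ((Complex.normSq (Bfn χ E r) : ℝ) : ℂ) := fun r => Complex.mul_conj _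
  simp_rw [cast1] at key
  rw [← Complex.ofReal_sum] at key
  apply Complex.ofReal_injective
  rw [key]
  push_cast [apply_ite (Complex.ofReal)]
  norm_num

lemma B_bound {χ : AddChar F ℂ} (hχ : χ ≠ 1) (h2 : (2 : F) ≠ 0) (E : Finset (Fin d → F))
    (hd : 1 ≤ d) :
    ∑ r ∈ univ.filter (fun r : F => r ≠ 0), (Complex.normSq (Bfn χ E r) : ℝ) ≤
      (Fintype.card F : ℝ) * (2 * (Fintype.card F : ℝ) ^ (d - 1)) *
        ∑ m ∈ univ.filter (fun m : Fin d → F => m ≠ 0), afn χ E m ^ 2 := by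
  have ha : ∀ m, 0 ≤ afn χ E m := fun m => Complex.normSq_nonneg _
  have hq0 : (0 : ℝ) ≤ (Fintype.card F : ℝ) := Nat.cast_nonneg _
  rw [B_rsum hχ h2 E]
  simp_rw [sub_eq_zero]
  set s0 := univ.filter (fun m : Fin d → F => m ≠ 0) with hs0
  set nrm := fun m : Fin d → F => ∑ i, m i ^ 2 with hnrm
  set W := fun t : F => ∑ m' ∈ s0.filter (fun m' => nrm m' = t), afn χ E m' with hW
  have step1 : ∑ m ∈ s0, ∑ m' ∈ s0, afn χ E m * afn χ E m' *
        (if nrm m' = nrm m then (Fintype.card F : ℝ) - 1 else -1) ≤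
      (Fintype.card F : ℝ) * ∑ m ∈ s0, afn χ E m * W (nrm m) := by
    rw [Finset.mul_sum]
    refine Finset.sum_le_sum fun m _ => ?_
    rw [← Finset.sum_filter_add_sum_filter_not s0 (fun m' => nrm m' = nrm m)]
    have hpos : ∑ m' ∈ s0.filter (fun m' => nrm m' = nrm m),
        afn χ E m * afn χ E m' * (if nrm m' = nrm m then (Fintype.card F : ℝ) - 1 else -1) ≤
        (Fintype.card F : ℝ) * (afn χ E m * W (nrm m)) := by
      rw [hW, Finset.mul_sum, Finset.mul_sum]
      refine Finset.sum_le_sum fun m' hm' => ?_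
      rw [Finset.mem_filter] at hm'
      rw [if_pos hm'.2]
      have h1 : 0 ≤ afn χ E m * afn χ E m' := mul_nonneg (ha m) (ha m')
      nlinarith [h1]
    have hneg : ∑ m' ∈ s0.filter (fun m' => ¬nrm m' = nrm m),
        afn χ E m * afn χ E m' * (if nrm m' = nrm m then (Fintype.card F : ℝ) - 1 else -1) ≤ 0 := by
      refine Finset.sum_nonpos fun m' hm' => ?_
      rw [Finset.mem_filter] at hm'
      rw [if_neg hm'.2]
      have h1 : 0 ≤ afn χ E m * afn χ E m' := mul_nonneg (ha m) (ha m')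
      nlinarith [h1]
    linarith
  refine le_trans step1 ?_
  rw [mul_assoc ((Fintype.card F : ℝ)) _ _]
  refine mul_le_mul_of_nonneg_left ?_ hq0
  -- now: ∑ m ∈ s0, afn m * W (nrm m) ≤ 2 q^(d-1) * ∑ m ∈ s0, afn m ^2
  have fib : ∀ f : (Fin d → F) → ℝ, ∑ t : F, ∑ m ∈ s0.filter (fun m => nrm m = t), f m
      = ∑ m ∈ s0, f m := fun f => Finset.sum_fiberwise s0 nrm f
  rw [← fib (fun m => afn χ E m * W (nrm m)), ← fib (fun m => afn χ E m ^ 2),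
    Finset.mul_sum]
  refine Finset.sum_le_sum fun t _ => ?_
  have hWt : ∑ m ∈ s0.filter (fun m => nrm m = t), afn χ E m * W (nrm m) = W t ^ 2 := by
    rw [sq, hW]
    rw [Finset.sum_mul]
    refine Finset.sum_congr rfl fun m hm => ?_
    rw [Finset.mem_filter] at hm
    rw [hm.2]
  rw [hWt]
  have hcardfib : ((s0.filter fun m => nrm m = t).card : ℝ) ≤
      2 * (Fintype.card F : ℝ) ^ (d - 1) := by
    have hsub : s0.filter (fun m => nrm m = t) ⊆ univ.filter (fun m => nrm m = t) :=
      Finset.filter_subset_filter _ (Finset.filter_subset _ _)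
    have := le_trans (Finset.card_le_card hsub) (sphere_card hd t)
    calc ((s0.filter fun m => nrm m = t).card : ℝ) ≤
        ((2 * Fintype.card F ^ (d - 1) : ℕ) : ℝ) := by exact_mod_cast this
      _ = 2 * (Fintype.card F : ℝ) ^ (d - 1) := by push_cast; ring
  have hCS : W t ^ 2 ≤ ((s0.filter fun m => nrm m = t).card : ℝ) *
      ∑ m ∈ s0.filter (fun m => nrm m = t), afn χ E m ^ 2 := by
    have := Finset.sum_mul_sq_le_sq_mul_sq (s0.filter fun m => nrm m = t)
      (fun _ => (1 : ℝ)) (afn χ E)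
    simpa [hW] using this
  refine le_trans hCS (mul_le_mul_of_nonneg_right hcardfib ?_)
  exact Finset.sum_nonneg fun m _ => sq_nonneg _

lemma T_split {χ : AddChar F ℂ} (hχ : χ ≠ 1) (h2 : (2 : F) ≠ 0) (E : Finset (Fin d → F))
    {r : F} (hr : r ≠ 0) :
    (Fintype.card F : ℂ) ^ d * Tfn χ E r =
      Gfn χ r ^ d * ((E.card : ℂ) ^ 2 + Bfn χ E r) := by
  rw [T_expand hχ h2 E hr]
  have hsplit : ∀ f : (Fin d → F) → ℂ, ∑ m : Fin d → F, f m =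
      f 0 + ∑ m ∈ univ.filter (fun m : Fin d → F => m ≠ 0), f m := by
    intro f
    rw [Finset.filter_ne', ← Finset.sum_erase_add univ f (Finset.mem_univ 0), add_comm]
  rw [hsplit]
  have h0 : χ (-((∑ i, (0 : Fin d → F) i ^ 2) * (4 * r)⁻¹)) * Gfn χ r ^ d *
      ((Complex.normSq (Sfn χ E 0) : ℝ) : ℂ) = Gfn χ r ^ d * (E.card : ℂ) ^ 2 := by
    have hS0 : Sfn χ E 0 = (E.card : ℂ) := by
      rw [Sfn]
      simp
    rw [hS0]
    have hn : Complex.normSq ((E.card : ℂ)) = (E.card : ℝ) ^ 2 := by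
      rw [Complex.normSq_natCast]
      push_cast
      ring
    rw [hn]
    simp only [Pi.zero_apply]
    norm_num
    try push_cast
    try ring
  rw [h0, mul_add]
  congr 1
  rw [Bfn, Finset.mul_sum]
  refine Finset.sum_congr rfl fun m _ => ?_
  rw [afn]
  ring

lemma key_ineq {χ : AddChar F ℂ} (hχ : χ ≠ 1) (h2 : (2 : F) ≠ 0) (E : Finset (Fin d → F))
    (hd : 1 ≤ d) :
    (Fintype.card F : ℝ) * (Lam E : ℝ) ≤ 3 * (E.card : ℝ) ^ 4 +
      4 * ∑ m ∈ univ.filter (fun m : Fin d → F => m ≠ 0), afn χ E m ^ 2 := by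
  have hq1 : (1 : ℝ) ≤ (Fintype.card F : ℝ) := by
    exact_mod_cast Fintype.card_pos
  have hqd_pos : (0 : ℝ) < (Fintype.card F : ℝ) ^ d := by positivity
  set q : ℝ := (Fintype.card F : ℝ) with hqdef
  set N : ℝ := (E.card : ℝ) with hNdef
  set Sa : ℝ := ∑ m ∈ univ.filter (fun m : Fin d → F => m ≠ 0), afn χ E m ^ 2 with hSa
  have hSa0 : 0 ≤ Sa := Finset.sum_nonneg fun m _ => sq_nonneg _
  have hN0 : 0 ≤ N := Nat.cast_nonneg _
  -- identity q Λ = ∑ normSq T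
  have hid : q * (Lam E : ℝ) = ∑ r : F, Complex.normSq (Tfn χ E r) := by
    apply Complex.ofReal_injective
    have h1 : ((∑ r : F, Complex.normSq (Tfn χ E r) : ℝ) : ℂ) =
        ∑ r : F, Tfn χ E r * (starRingEnd ℂ) (Tfn χ E r) := by
      push_cast
      exact Finset.sum_congr rfl fun r _ => (Complex.mul_conj _).symm
    rw [h1, sum_T_normSq hχ E]
    rw [hqdef]
    push_cast
    ring
  -- T at 0
  have hT0 : Complex.normSq (Tfn χ E 0) = N ^ 4 := by
    have hT0' : Tfn χ E 0 = ((E.card : ℂ)) ^ 2 := by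
      rw [Tfn]
      have hone : ∀ p ∈ E ×ˢ E, χ (0 * ∑ i, (p.1 i - p.2 i) ^ 2) = 1 := fun p _ => by
        rw [zero_mul, AddChar.map_zero_eq_one]
      rw [Finset.sum_congr rfl hone, Finset.sum_const, Finset.card_product]
      push_cast
      ring
    rw [hT0', map_pow, Complex.normSq_natCast, hNdef]
    push_cast
    ring
  -- Gauss value
  have hG : ∀ r : F, r ≠ 0 → Complex.normSq (Gfn χ r) = q := by
    intro r hr
    have hg := gauss_normSq hχ h2 hr
    rw [Complex.mul_conj] at hg
    exact_mod_cast hg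
  -- per r ≠ 0 bound, scaled by q^d
  have hr_bound : ∀ r ∈ univ.filter (fun r : F => r ≠ 0),
      q ^ d * Complex.normSq (Tfn χ E r) ≤
        2 * N ^ 4 + 2 * Complex.normSq (Bfn χ E r) := by
    intro r hr
    rw [Finset.mem_filter] at hr
    have hTs := T_split hχ h2 E hr.2
    have h1 : Complex.normSq ((Fintype.card F : ℂ) ^ d) * Complex.normSq (Tfn χ E r) =
        Complex.normSq (Gfn χ r) ^ d * Complex.normSq ((E.card : ℂ) ^ 2 + Bfn χ E r) := by
      rw [← map_pow, ← map_mul, hTs, map_mul, map_pow]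
    have hqd : Complex.normSq ((Fintype.card F : ℂ) ^ d) = (q ^ d) ^ 2 := by
      rw [map_pow, Complex.normSq_natCast, hqdef]
      push_cast
      ring
    rw [hqd, hG r hr.2] at h1
    have habs : Complex.normSq ((E.card : ℂ) ^ 2 + Bfn χ E r) ≤
        2 * N ^ 4 + 2 * Complex.normSq (Bfn χ E r) := by
      have h3 := norm_add_le ((E.card : ℂ) ^ 2) (Bfn χ E r)
      have e1 : Complex.normSq ((E.card : ℂ) ^ 2 + Bfn χ E r) =
          ‖(E.card : ℂ) ^ 2 + Bfn χ E r‖ ^ 2 := (Complex.sq_norm _).symm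
      have e2 : ‖(E.card : ℂ) ^ 2‖ = N ^ 2 := by
        rw [norm_pow, Complex.norm_natCast, hNdef]
      have e3 : Complex.normSq (Bfn χ E r) = ‖Bfn χ E r‖ ^ 2 :=
        (Complex.sq_norm _).symm
      nlinarith [h3, e1, e2, e3,
        sq_nonneg (‖(E.card : ℂ) ^ 2‖ - ‖Bfn χ E r‖),
        norm_nonneg ((E.card : ℂ) ^ 2 + Bfn χ E r),
        norm_nonneg (Bfn χ E r), norm_nonneg ((E.card : ℂ) ^ 2)]
    calc q ^ d * Complex.normSq (Tfn χ E r) =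
        (q ^ d)⁻¹ * ((q ^ d) ^ 2 * Complex.normSq (Tfn χ E r)) := by
          rw [sq, mul_assoc, inv_mul_cancel_left₀ (ne_of_gt hqd_pos)]
      _ = (q ^ d)⁻¹ * (q ^ d * Complex.normSq ((E.card : ℂ) ^ 2 + Bfn χ E r)) := by rw [h1]
      _ = Complex.normSq ((E.card : ℂ) ^ 2 + Bfn χ E r) := by
          rw [inv_mul_cancel_left₀ (ne_of_gt hqd_pos)]
      _ ≤ 2 * N ^ 4 + 2 * Complex.normSq (Bfn χ E r) := habs
  -- split the r-sum
  have hsplitF : ∀ f : F → ℝ, ∑ r : F, f r =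
      f 0 + ∑ r ∈ univ.filter (fun r : F => r ≠ 0), f r := by
    intro f
    rw [Finset.filter_ne', ← Finset.sum_erase_add univ f (Finset.mem_univ 0), add_comm]
  have hcard_filter : ((univ.filter (fun r : F => r ≠ 0)).card : ℝ) ≤ q := by
    have := Finset.card_le_card (Finset.filter_subset (fun r : F => r ≠ 0) univ)
    rw [Finset.card_univ] at this
    rw [hqdef]
    exact_mod_cast this
  have hq_le_qd : q ≤ q ^ d := le_self_pow₀ (by linarith) (by omega)
  have hpow : q * q ^ (d - 1) = q ^ d := by
    rw [← pow_succ']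
    congr 1
    omega
  -- main chain
  have main : q ^ d * (q * (Lam E : ℝ)) ≤ q ^ d * (3 * N ^ 4 + 4 * Sa) := by
    rw [hid, hsplitF (fun r => Complex.normSq (Tfn χ E r)), mul_add, hT0]
    have hsum1 : q ^ d * ∑ r ∈ univ.filter (fun r : F => r ≠ 0), Complex.normSq (Tfn χ E r) ≤
        ((univ.filter (fun r : F => r ≠ 0)).card : ℝ) * (2 * N ^ 4) +
          2 * ∑ r ∈ univ.filter (fun r : F => r ≠ 0), Complex.normSq (Bfn χ E r) := by
      rw [Finset.mul_sum]
      calc ∑ r ∈ univ.filter (fun r : F => r ≠ 0), q ^ d * Complex.normSq (Tfn χ E r) ≤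
          ∑ r ∈ univ.filter (fun r : F => r ≠ 0),
            (2 * N ^ 4 + 2 * Complex.normSq (Bfn χ E r)) := Finset.sum_le_sum hr_bound
        _ = ((univ.filter (fun r : F => r ≠ 0)).card : ℝ) * (2 * N ^ 4) +
            2 * ∑ r ∈ univ.filter (fun r : F => r ≠ 0), Complex.normSq (Bfn χ E r) := by
          rw [Finset.sum_add_distrib, Finset.sum_const, ← Finset.mul_sum]
          simp [mul_comm]
    have hBsum : ∑ r ∈ univ.filter (fun r : F => r ≠ 0), Complex.normSq (Bfn χ E r) ≤
        q * (2 * q ^ (d - 1)) * Sa := B_bound hχ h2 E hd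
    have hnB0 : (0:ℝ) ≤ ∑ r ∈ univ.filter (fun r : F => r ≠ 0), Complex.normSq (Bfn χ E r) :=
      Finset.sum_nonneg fun r _ => Complex.normSq_nonneg _
    have hN4 : (0:ℝ) ≤ N ^ 4 := by positivity
    nlinarith [hsum1, hBsum, hcard_filter, hq_le_qd, hpow, hN4, hSa0, hqd_pos]
  exact le_of_mul_le_mul_left main hqd_pos

lemma CS_bound (E : Finset (Fin d → F)) :
    ((E.card : ℝ)) ^ 4 ≤ (((E ×ˢ E).image Dfun).card : ℝ) * (Lam E : ℝ) := by
  have h1 : ((E.card : ℝ)) ^ 4 = (∑ t ∈ (E ×ˢ E).image Dfun, (nuf E t : ℝ)) ^ 2 := by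
    have := sum_nuf E
    have h2 : (∑ t ∈ (E ×ˢ E).image Dfun, (nuf E t : ℝ)) = ((E.card : ℝ)) ^ 2 := by
      exact_mod_cast congrArg (Nat.cast : ℕ → ℝ) this
    rw [h2]
    ring
  rw [h1]
  have hCS := Finset.sum_mul_sq_le_sq_mul_sq ((E ×ˢ E).image Dfun)
    (fun _ => (1 : ℝ)) (fun t => (nuf E t : ℝ))
  simp only [one_pow, one_mul, Finset.sum_const, nsmul_eq_mul, mul_one] at hCS
  have hLam : (Lam E : ℝ) = ∑ t ∈ (E ×ˢ E).image Dfun, ((nuf E t : ℝ)) ^ 2 := by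
    rw [Lam_eq]
    push_cast
    rfl
  rw [hLam]
  exact hCS

lemma Sa_bound {χ : AddChar F ℂ} (E : Finset (Fin d → F)) {A s : ℝ} (hA : 0 ≤ A)
    (hL4 : lpNorm χ E 4 ≤ A * ((Fintype.card F : ℝ) ^ d)⁻¹ * (E.card : ℝ) ^ (1 - s)) :
    ∑ m ∈ univ.filter (fun m : Fin d → F => m ≠ 0), afn χ E m ^ 2 ≤
      A ^ 4 * (Fintype.card F : ℝ) ^ d * (E.card : ℝ) ^ ((4 : ℝ) - 4 * s) := by
  have hq1 : (1 : ℝ) ≤ (Fintype.card F : ℝ) := by exact_mod_cast Fintype.card_pos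
  have hqd_pos : (0 : ℝ) < (Fintype.card F : ℝ) ^ d := by positivity
  have hqd_ne : ((Fintype.card F : ℝ) ^ d) ≠ 0 := ne_of_gt hqd_pos
  have hN0 : (0 : ℝ) ≤ (E.card : ℝ) := Nat.cast_nonneg _
  set Sig4 : ℝ := ∑ x ∈ univ.filter (fun x : Fin d → F => x ≠ 0),
    ‖fourierTransform χ E x‖ ^ (4 : ℝ) with hSig4
  have hSig40 : 0 ≤ Sig4 :=
    Finset.sum_nonneg fun x _ => Real.rpow_nonneg (norm_nonneg _) _
  set X : ℝ := ((Fintype.card F : ℝ) ^ d)⁻¹ * Sig4 with hX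
  have hX0 : 0 ≤ X := mul_nonneg (by positivity) hSig40
  have hlp : lpNorm χ E 4 = X ^ ((1 : ℝ) / 4) := rfl
  have hXeq : X = (X ^ ((1 : ℝ) / 4)) ^ (4 : ℕ) := by
    rw [← Real.rpow_natCast (X ^ ((1 : ℝ) / 4)) 4, ← Real.rpow_mul hX0]
    norm_num
  have hRHS0 : 0 ≤ A * ((Fintype.card F : ℝ) ^ d)⁻¹ * (E.card : ℝ) ^ (1 - s) := by
    have := Real.rpow_nonneg hN0 (1 - s)
    exact mul_nonneg (mul_nonneg hA (inv_nonneg.mpr hqd_pos.le)) this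
  have hXle : X ≤ A ^ 4 * (((Fintype.card F : ℝ) ^ d)⁻¹) ^ 4 *
      (E.card : ℝ) ^ ((4 : ℝ) - 4 * s) := by
    have h1 : X ≤ (A * ((Fintype.card F : ℝ) ^ d)⁻¹ * (E.card : ℝ) ^ (1 - s)) ^ (4 : ℕ) := by
      rw [hXeq]
      exact pow_le_pow_left₀ (Real.rpow_nonneg hX0 _) (hlp ▸ hL4) 4
    refine le_trans h1 (le_of_eq ?_)
    rw [mul_pow, mul_pow, ← Real.rpow_natCast ((E.card : ℝ) ^ (1 - s)) 4,
      ← Real.rpow_mul hN0]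
    norm_num
    left
    ring
  -- identify Sig4 with Sa
  have habs4 : ∀ x : Fin d → F, ‖fourierTransform χ E x‖ ^ (4 : ℝ) =
      ((((Fintype.card F : ℝ) ^ d)⁻¹) ^ 4) * afn χ E (-x) ^ 2 := by
    intro x
    have h1 : fourierTransform χ E x = ((Fintype.card F : ℂ) ^ d)⁻¹ * Sfn χ E (-x) := by
      rw [fourierTransform, Sfn]
      congr 1
      refine Finset.sum_congr rfl fun y _ => ?_
      congr 1
      rw [← Finset.sum_neg_distrib]
      refine Finset.sum_congr rfl fun i _ => ?_
      simp
    have h4nat : ∀ a : ℝ, a ^ (4 : ℝ) = a ^ (4 : ℕ) := fun a => by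
      rw [← Real.rpow_natCast a 4]
      norm_num
    rw [h1, norm_mul, norm_inv, norm_pow, Complex.norm_natCast, h4nat, mul_pow, inv_pow]
    rw [afn, ← Complex.sq_norm]
    ring
  have hreindex : ∑ x ∈ univ.filter (fun x : Fin d → F => x ≠ 0), afn χ E (-x) ^ 2 =
      ∑ m ∈ univ.filter (fun m : Fin d → F => m ≠ 0), afn χ E m ^ 2 := by
    apply Finset.sum_nbij' (fun x => -x) (fun m => -m)
    · intro x hx
      simp only [Finset.mem_filter, Finset.mem_univ, true_and] at hx ⊢
      simpa using hx
    · intro m hm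
      simp only [Finset.mem_filter, Finset.mem_univ, true_and] at hm ⊢
      simpa using hm
    · intro x _; simp
    · intro m _; simp
    · intro x _; rfl
  have hSig4eq : Sig4 = (((Fintype.card F : ℝ) ^ d)⁻¹) ^ 4 *
      ∑ m ∈ univ.filter (fun m : Fin d → F => m ≠ 0), afn χ E m ^ 2 := by
    rw [hSig4, ← hreindex, Finset.mul_sum]
    exact Finset.sum_congr rfl fun x _ => habs4 x
  have hSaeq : ∑ m ∈ univ.filter (fun m : Fin d → F => m ≠ 0), afn χ E m ^ 2 =
      ((Fintype.card F : ℝ) ^ d) ^ 4 * Sig4 := by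
    rw [hSig4eq]
    field_simp
  rw [hSaeq]
  have hSig4X : Sig4 = (Fintype.card F : ℝ) ^ d * X := by
    rw [hX]
    field_simp
  rw [hSig4X]
  calc ((Fintype.card F : ℝ) ^ d) ^ 4 * ((Fintype.card F : ℝ) ^ d * X) =
      ((Fintype.card F : ℝ) ^ d) ^ 5 * X := by ring
    _ ≤ ((Fintype.card F : ℝ) ^ d) ^ 5 *
        (A ^ 4 * (((Fintype.card F : ℝ) ^ d)⁻¹) ^ 4 * (E.card : ℝ) ^ ((4 : ℝ) - 4 * s)) :=
      mul_le_mul_of_nonneg_left hXle (by positivity)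
    _ = A ^ 4 * (Fintype.card F : ℝ) ^ d * (E.card : ℝ) ^ ((4 : ℝ) - 4 * s) := by
      have hinv : ((Fintype.card F : ℝ) ^ d)⁻¹ * (Fintype.card F : ℝ) ^ d = 1 :=
        inv_mul_cancel₀ hqd_ne
      linear_combination (A ^ 4 * (E.card : ℝ) ^ ((4 : ℝ) - 4 * s) * (Fintype.card F : ℝ) ^ d *
        ((((Fintype.card F : ℝ) ^ d)⁻¹ * (Fintype.card F : ℝ) ^ d) ^ 3 +
          (((Fintype.card F : ℝ) ^ d)⁻¹ * (Fintype.card F : ℝ) ^ d) ^ 2 +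
          ((Fintype.card F : ℝ) ^ d)⁻¹ * (Fintype.card F : ℝ) ^ d + 1)) * hinv
end Aux


/-- Distance sets from `L⁴` Fourier bounds: fix `d ≥ 2`, `s ∈ (0,1/2]`, `A ≥ 1`. There
are `C, c > 0` such that for every finite field of odd order `q` and every
`E ⊆ F_q^d` with `#E ≥ C q^{d/2}` and `‖Ê‖₄ ≤ A q^{-d} (#E)^{1-s}`, the distance set
`D(E) = {∑ᵢ (xᵢ - yᵢ)² : x, y ∈ E}` satisfies
`#D(E) ≥ c · min( q, q^{1-d} (#E)^{4s} )`. -/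
theorem distance_set_bound (d : ℕ) (hd : 2 ≤ d) (s : ℝ) (hs0 : 0 < s) (hs1 : s ≤ 1 / 2)
    (A : ℝ) (hA : 1 ≤ A) :
    ∃ C c : ℝ, 0 < C ∧ 0 < c ∧
      ∀ (F : Type) [Field F] [Fintype F] [DecidableEq F],
        Odd (Fintype.card F) →
        ∀ χ : AddChar F ℂ, (∃ a, χ a ≠ 1) →
        ∀ E : Finset (Fin d → F),
          C * (Fintype.card F : ℝ) ^ ((d : ℝ) / 2) ≤ (E.card : ℝ) →
          lpNorm χ E 4 ≤ A * ((Fintype.card F : ℝ) ^ d)⁻¹ * (E.card : ℝ) ^ (1 - s) →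
          c * min ((Fintype.card F : ℝ))
              ((Fintype.card F : ℝ) ^ ((1 : ℝ) - (d : ℝ)) * (E.card : ℝ) ^ (4 * s)) ≤
            ((((E ×ˢ E).image fun z : (Fin d → F) × (Fin d → F) =>
                ∑ i, (z.1 i - z.2 i) ^ 2).card : ℝ)) := by
  have hA4 : (1 : ℝ) ≤ A ^ 4 := one_le_pow₀ hA
  refine ⟨1, (7 * A ^ 4)⁻¹, one_pos, by positivity, ?_⟩
  intro F _ _ _ hodd χ hχex E hsize hL4
  have hχ : χ ≠ 1 := AddChar.ne_one_iff.mpr hχex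
  have h2 : (2 : F) ≠ 0 := my_two_ne_zero hodd
  have hq1 : (1 : ℝ) ≤ (Fintype.card F : ℝ) := by exact_mod_cast Fintype.card_pos
  have hq0 : (0 : ℝ) < (Fintype.card F : ℝ) := by linarith
  have hN1 : (1 : ℝ) ≤ (E.card : ℝ) := by
    have h1 : (1 : ℝ) ≤ (Fintype.card F : ℝ) ^ ((d : ℝ) / 2) :=
      Real.one_le_rpow hq1 (by positivity)
    calc (1:ℝ) ≤ (Fintype.card F : ℝ) ^ ((d : ℝ) / 2) := h1
      _ = 1 * (Fintype.card F : ℝ) ^ ((d : ℝ) / 2) := by ring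
      _ ≤ (E.card : ℝ) := hsize
  have hN0 : (0 : ℝ) < (E.card : ℝ) := by linarith
  have hEne : E.Nonempty := by
    rw [← Finset.card_pos]
    exact_mod_cast lt_of_lt_of_le zero_lt_one hN1
  have hLam1 : 1 ≤ Lam E := by
    obtain ⟨x, hx⟩ := hEne
    have hmem : ((x, x), (x, x)) ∈
        (((E ×ˢ E) ×ˢ (E ×ˢ E)).filter fun z => Dfun z.1 = Dfun z.2) := by
      rw [Finset.mem_filter]
      exact ⟨Finset.mem_product.mpr ⟨Finset.mem_product.mpr ⟨hx, hx⟩,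
        Finset.mem_product.mpr ⟨hx, hx⟩⟩, rfl⟩
    rw [Lam]
    exact Finset.card_pos.mpr ⟨_, hmem⟩
  have hLamR : (0 : ℝ) < (Lam E : ℝ) := by exact_mod_cast hLam1
  have hkey := key_ineq hχ h2 E (by omega)
  have hSab := Sa_bound E (by linarith : (0:ℝ) ≤ A) hL4
  have hCS := CS_bound E
  have hDC : ((((E ×ˢ E).image fun z : (Fin d → F) × (Fin d → F) =>
      ∑ i, (z.1 i - z.2 i) ^ 2).card : ℝ)) = (((E ×ˢ E).image Dfun).card : ℝ) := rfl
  rw [hDC]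
  set q : ℝ := (Fintype.card F : ℝ) with hqdef
  set N : ℝ := (E.card : ℝ) with hNdef
  set DC : ℝ := (((E ×ˢ E).image Dfun).card : ℝ) with hDCdef
  set M : ℝ := min q (q ^ ((1 : ℝ) - (d : ℝ)) * N ^ (4 * s)) with hM
  have hDC0 : (0 : ℝ) ≤ DC := Nat.cast_nonneg _
  have hM1 : M ≤ q := min_le_left _ _
  have hM2 : M ≤ q ^ ((1 : ℝ) - (d : ℝ)) * N ^ (4 * s) := min_le_right _ _
  have hM0 : (0 : ℝ) ≤ M := le_min (by linarith) (by positivity)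
  have hqpow : q ^ ((1 : ℝ) - (d : ℝ)) * q ^ d = q := by
    rw [← Real.rpow_natCast q d, ← Real.rpow_add hq0]
    norm_num
  have hNpow : N ^ (4 * s) * N ^ ((4 : ℝ) - 4 * s) = N ^ (4 : ℕ) := by
    rw [← Real.rpow_add hN0, ← Real.rpow_natCast N 4]
    norm_num
  -- combine key and Sa bound
  have hqLam : q * (Lam E : ℝ) ≤ 3 * N ^ 4 + 4 * (A ^ 4 * q ^ d * N ^ ((4 : ℝ) - 4 * s)) := by
    calc q * (Lam E : ℝ) ≤ 3 * N ^ 4 +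
          4 * ∑ m ∈ univ.filter (fun m : Fin d → F => m ≠ 0), afn χ E m ^ 2 := hkey
      _ ≤ 3 * N ^ 4 + 4 * (A ^ 4 * q ^ d * N ^ ((4 : ℝ) - 4 * s)) := by linarith
  have hterm2 : M * (4 * (A ^ 4 * q ^ d * N ^ ((4 : ℝ) - 4 * s))) ≤ 4 * A ^ 4 * q * N ^ 4 := by
    have h1 : M * (4 * (A ^ 4 * q ^ d * N ^ ((4 : ℝ) - 4 * s))) ≤
        (q ^ ((1 : ℝ) - (d : ℝ)) * N ^ (4 * s)) *
          (4 * (A ^ 4 * q ^ d * N ^ ((4 : ℝ) - 4 * s))) := by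
      refine mul_le_mul_of_nonneg_right hM2 ?_
      have := Real.rpow_nonneg (le_of_lt hN0) ((4 : ℝ) - 4 * s)
      positivity
    refine le_trans h1 (le_of_eq ?_)
    calc (q ^ ((1 : ℝ) - (d : ℝ)) * N ^ (4 * s)) *
          (4 * (A ^ 4 * q ^ d * N ^ ((4 : ℝ) - 4 * s))) =
        4 * A ^ 4 * (q ^ ((1 : ℝ) - (d : ℝ)) * q ^ d) *
          (N ^ (4 * s) * N ^ ((4 : ℝ) - 4 * s)) := by ring
      _ = 4 * A ^ 4 * q * N ^ 4 := by rw [hqpow, hNpow]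
  have hN4 : (0:ℝ) < N ^ 4 := by positivity
  have hstep : M * (q * (Lam E : ℝ)) ≤ (7 * A ^ 4 * DC) * (q * (Lam E : ℝ)) := by
    have c1 : M * (q * (Lam E : ℝ)) ≤ M * (3 * N ^ 4) +
        M * (4 * (A ^ 4 * q ^ d * N ^ ((4 : ℝ) - 4 * s))) := by
      calc M * (q * (Lam E : ℝ)) ≤
          M * (3 * N ^ 4 + 4 * (A ^ 4 * q ^ d * N ^ ((4 : ℝ) - 4 * s))) :=
            mul_le_mul_of_nonneg_left hqLam hM0
        _ = M * (3 * N ^ 4) + M * (4 * (A ^ 4 * q ^ d * N ^ ((4 : ℝ) - 4 * s))) := by ring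
    have c2 : M * (3 * N ^ 4) ≤ q * (3 * N ^ 4) :=
      mul_le_mul_of_nonneg_right hM1 (by positivity)
    have c3 : M * (q * (Lam E : ℝ)) ≤ 7 * A ^ 4 * q * N ^ 4 := by
      have : q * (3 * N ^ 4) + 4 * A ^ 4 * q * N ^ 4 ≤ 7 * A ^ 4 * q * N ^ 4 := by
        have haux : 0 ≤ (A ^ 4 - 1) * (q * N ^ 4) :=
          mul_nonneg (by linarith) (by positivity)
        nlinarith [haux]
      linarith [c1, c2, hterm2]
    have c4 : 7 * A ^ 4 * q * N ^ 4 ≤ 7 * A ^ 4 * q * (DC * (Lam E : ℝ)) := by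
      have h70 : (0:ℝ) ≤ 7 * A ^ 4 * q := by positivity
      have : N ^ 4 ≤ DC * (Lam E : ℝ) := hCS
      exact mul_le_mul_of_nonneg_left this h70
    calc M * (q * (Lam E : ℝ)) ≤ 7 * A ^ 4 * q * N ^ 4 := c3
      _ ≤ 7 * A ^ 4 * q * (DC * (Lam E : ℝ)) := c4
      _ = (7 * A ^ 4 * DC) * (q * (Lam E : ℝ)) := by ring
  have hqLam0 : (0 : ℝ) < q * (Lam E : ℝ) := mul_pos hq0 hLamR
  have hfinal : M ≤ 7 * A ^ 4 * DC := le_of_mul_le_mul_right hstep hqLam0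
  have h7 : (0 : ℝ) < 7 * A ^ 4 := by positivity
  calc (7 * A ^ 4)⁻¹ * M ≤ (7 * A ^ 4)⁻¹ * (7 * A ^ 4 * DC) :=
      mul_le_mul_of_nonneg_left hfinal (by positivity)
    _ = DC := by
      rw [inv_mul_cancel_left₀ (ne_of_gt h7)]
end
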